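/- The product of any ℓ ≥ ⌊n/2⌋ irreducible n×n row-stochastic matrices, each with strictly positive diagonal entries, is a scrambling matrix. -/
import Mathlib

open Matrix Finset

private lemma listProdNonneg {n : ℕ} (L : List (Matrix (Fin n) (Fin n) ℝ))
    (h : ∀ M ∈ L, ∀ i j, 0 ≤ M i j) : ∀ i j, 0 ≤ L.prod i j := by
  induction L with
  | nil =>
    intro i j
    by_cases hij : i = j <;> simp [Matrix.one_apply, hij]
  | cons M L ih =>
    intro i j
    rw [List.prod_cons, Matrix.mul_apply]
    exact Finset.sum_nonneg fun m _ => mul_nonneg (h M (by simp) i m)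
      (ih (fun N hN => h N (by simp [hN])) m j)

private lemma mulApplyNeZero {n : ℕ} {A B : Matrix (Fin n) (Fin n) ℝ}
    (hA : ∀ i j, 0 ≤ A i j) (hB : ∀ i j, 0 ≤ B i j) (i k : Fin n) :
    (A * B) i k ≠ 0 ↔ ∃ m, A i m ≠ 0 ∧ B m k ≠ 0 := by
  rw [Matrix.mul_apply, ← not_iff_not, not_ne_iff, not_exists,
    Finset.sum_eq_zero_iff_of_nonneg (fun m _ => mul_nonneg (hA i m) (hB m k))]
  simp only [Finset.mem_univ, true_implies, mul_eq_zero, not_and_or, not_not, ne_eq]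

private lemma crossing {n : ℕ} (M : Matrix (Fin n) (Fin n) ℝ)
    (hirr : ∀ i j : Fin n, Relation.ReflTransGen (fun x y => M y x ≠ 0) i j)
    (S : Finset (Fin n)) {y x : Fin n} (hy : y ∈ S) (hx : x ∉ S) :
    ∃ k ∉ S, ∃ m ∈ S, M m k ≠ 0 := by
  have key : ∀ z, Relation.ReflTransGen (fun a b => M b a ≠ 0) x z → z ∈ S →
      ∃ k ∉ S, ∃ m ∈ S, M m k ≠ 0 := by
    intro z h
    induction h with
    | refl => intro h; exact absurd h hx
    | @tail b c h' step ih =>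
      intro hc
      by_cases hb : b ∈ S
      · exact ih hb
      · exact ⟨b, hb, c, hc, step⟩
  exact key y (hirr x y) hy

private lemma keyLemma {n : ℕ} : ∀ (L : List (Matrix (Fin n) (Fin n) ℝ)),
    (∀ M ∈ L, ∀ i j, 0 ≤ M i j) →
    (∀ M ∈ L, ∀ i, 0 < M i i) →
    (∀ M ∈ L, ∀ i j : Fin n, Relation.ReflTransGen (fun x y => M y x ≠ 0) i j) →
    ∀ i : Fin n, L.prod i i ≠ 0 ∧
      min n (L.length + 1) ≤ (univ.filter (fun k => L.prod i k ≠ 0)).card := by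
  intro L
  induction L using List.reverseRecOn with
  | nil =>
    intro _ _ _ i
    constructor
    · simp [Matrix.one_apply]
    · have : i ∈ univ.filter (fun k => (List.prod ([] : List (Matrix (Fin n) (Fin n) ℝ))) i k ≠ 0) := by
        simp [Matrix.one_apply]
      have h1 : 1 ≤ (univ.filter (fun k => (List.prod ([] : List (Matrix (Fin n) (Fin n) ℝ))) i k ≠ 0)).card :=
        Finset.card_pos.mpr ⟨i, this⟩
      simpa using le_trans (min_le_right n 1) h1
  | append_singleton l M ih =>
    intro hnonneg hdiag hirr i
    have hMl : M ∈ l ++ [M] := by simp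
    have hmem : ∀ N ∈ l, N ∈ l ++ [M] := fun N hN => by simp [hN]
    have hPn : ∀ a b, 0 ≤ l.prod a b :=
      listProdNonneg l (fun N hN => hnonneg N (hmem N hN))
    have hMn : ∀ a b, 0 ≤ M a b := hnonneg M hMl
    obtain ⟨hdiagP, hcard⟩ := ih (fun N hN => hnonneg N (hmem N hN))
      (fun N hN => hdiag N (hmem N hN)) (fun N hN => hirr N (hmem N hN)) i
    have hprod : (l ++ [M]).prod = l.prod * M := by simp
    set S : Finset (Fin n) := univ.filter (fun k => l.prod i k ≠ 0) with hS
    set S' : Finset (Fin n) := univ.filter (fun k => (l ++ [M]).prod i k ≠ 0) with hS'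
    have hmemS' : ∀ k, k ∈ S' ↔ ∃ m ∈ S, M m k ≠ 0 := by
      intro k
      simp only [hS', hS, mem_filter, mem_univ, true_and, hprod,
        mulApplyNeZero hPn hMn]
    have hsub : S ⊆ S' := by
      intro m hm
      rw [hmemS']
      exact ⟨m, hm, (hdiag M hMl m).ne'⟩
    have hiS : i ∈ S := by simp [hS, hdiagP]
    constructor
    · have : i ∈ S' := hsub hiS
      simpa [hS', hprod] using (mem_filter.mp this).2
    · by_cases hfull : n ≤ S.card
      · have : S.card ≤ S'.card := Finset.card_le_card hsub
        have hn : S'.card ≤ n := by simpa using Finset.card_le_card (Finset.subset_univ S')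
        omega
      · -- S is a proper subset, find crossing element
        push_neg at hfull
        have hne : S ≠ univ := by
          intro h; rw [h] at hfull; simp at hfull
        obtain ⟨x, hx⟩ : ∃ x, x ∉ S := by
          by_contra h; push_neg at h
          exact hne (Finset.eq_univ_of_forall h)
        obtain ⟨k, hk, m, hm, hMmk⟩ := crossing M (hirr M hMl) S hiS hx
        have hkS' : k ∈ S' := (hmemS' k).mpr ⟨m, hm, hMmk⟩
        have hins : insert k S ⊆ S' := by
          intro a ha
          rcases Finset.mem_insert.mp ha with h | h
          · exact h ▸ hkS'
          · exact hsub h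
        have hc : S.card + 1 ≤ S'.card := by
          have := Finset.card_le_card hins
          rwa [Finset.card_insert_of_notMem hk] at this
        simp only [List.length_append, List.length_singleton]
        omega

theorem stmt12 {n : ℕ} (L : List (Matrix (Fin n) (Fin n) ℝ))
    (hlen : n / 2 ≤ L.length)
    (hnonneg : ∀ M ∈ L, ∀ i j, 0 ≤ M i j)
    (hrow : ∀ M ∈ L, ∀ i, ∑ j, M i j = 1)
    (hdiag : ∀ M ∈ L, ∀ i, 0 < M i i)
    (hirr : ∀ M ∈ L, ∀ i j : Fin n, Relation.ReflTransGen (fun x y => M y x ≠ 0) i j) :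
    ∀ i j : Fin n, ∃ k, L.prod i k ≠ 0 ∧ L.prod j k ≠ 0 := by
  intro i j
  by_contra h
  push_neg at h
  obtain ⟨-, hi⟩ := keyLemma L hnonneg hdiag hirr i
  obtain ⟨-, hj⟩ := keyLemma L hnonneg hdiag hirr j
  set Si : Finset (Fin n) := univ.filter (fun k => L.prod i k ≠ 0) with hSi
  set Sj : Finset (Fin n) := univ.filter (fun k => L.prod j k ≠ 0) with hSj
  have hdisj : Disjoint Si Sj := by
    rw [Finset.disjoint_left]
    intro k hk hk'
    simp only [hSi, hSj, mem_filter, mem_univ, true_and] at hk hk'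
    exact hk' (h k hk)
  have hunion : Si.card + Sj.card ≤ n := by
    have := Finset.card_le_card (Finset.subset_univ (Si ∪ Sj))
    rw [Finset.card_union_of_disjoint hdisj] at this
    simpa using this
  have hn : 0 < n := i.pos
  omega
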